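/- arXiv:1703.04829 — 5 statements merged into one kernel-verified Lean document; each statement's English description precedes it below -/
import Mathlib

section
/- Let X = [x_1 … x_N] ∈ ℝ^{n×N} have nonzero columns and let α ∈ (0,1] satisfy α ≤ σ(X). Then v_α(X) ≤ ρ_α(X). -/
open scoped BigOperators

noncomputable section

/-- Euclidean dot product on `ℝⁿ`. -/
def dotR {n : ℕ} (u v : Fin n → ℝ) : ℝ := ∑ i, u i * v i

/-- Euclidean 2-norm on `ℝⁿ`. -/
def nrm {n : ℕ} (v : Fin n → ℝ) : ℝ := Real.sqrt (∑ i, v i ^ 2)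

/-- Normalized columns: `x̃_t = x_t / ‖x_t‖₂`. -/
def ntild {n N : ℕ} (x : Fin N → Fin n → ℝ) (t : Fin N) : Fin n → ℝ :=
  (nrm (x t))⁻¹ • x t

/-- The index set `𝓘_α(X,η) = {t : |x_tᵀη| ≥ α‖x_t‖₂‖η‖₂}`. -/
def Iset {n N : ℕ} (x : Fin N → Fin n → ℝ) (a : ℝ) (η : Fin n → ℝ) : Finset (Fin N) :=
  Finset.univ.filter fun t => a * nrm (x t) * nrm η ≤ |dotR (x t) η|

/-- The correlation measure `ρ_α(X) = (1/N)·inf_{η ≠ 0} |𝓘_α(X,η)|`. -/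
def rhoX {n N : ℕ} (x : Fin N → Fin n → ℝ) (a : ℝ) : ℝ :=
  (1 / N) * sInf ((fun η : Fin n → ℝ => ((Iset x a η).card : ℝ)) '' {η | η ≠ 0})

/-- `σ(X) = min {‖X̃ᵀη‖_∞ : ‖η‖₂ = 1}` where `‖X̃ᵀη‖_∞ = max_t |x̃_tᵀη|`. -/
def sigmaX {n N : ℕ} (x : Fin N → Fin n → ℝ) : ℝ :=
  sInf ((fun η : Fin n → ℝ => ⨆ t : Fin N, |dotR (ntild x t) η|) '' {η | nrm η = 1})

/-- `δ = √(1−α²) − √(1−σ(X)²)`. -/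
def deltaX {n N : ℕ} (x : Fin N → Fin n → ℝ) (a : ℝ) : ℝ :=
  Real.sqrt (1 - a ^ 2) - Real.sqrt (1 - sigmaX x ^ 2)

/-- `J_{t,α}(X) = {k : |x̃_kᵀx̃_t| ≥ √(1−δ²)}`. -/
def Jset {n N : ℕ} (x : Fin N → Fin n → ℝ) (a : ℝ) (t : Fin N) : Finset (Fin N) :=
  Finset.univ.filter fun k =>
    Real.sqrt (1 - deltaX x a ^ 2) ≤ |dotR (ntild x k) (ntild x t)|

/-- `v_α(X) = (1/N)·min_t |J_{t,α}(X)|`. -/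
def vX {n N : ℕ} (x : Fin N → Fin n → ℝ) (a : ℝ) : ℝ :=
  (1 / N) * ⨅ t : Fin N, ((Jset x a t).card : ℝ)

section Aux
variable {n : ℕ}

lemma dotR_comm (u v : Fin n → ℝ) : dotR u v = dotR v u := by
  simp [dotR, mul_comm]

lemma dotR_self (v : Fin n → ℝ) : dotR v v = ∑ i, v i ^ 2 := by
  simp [dotR, sq]

lemma nrm_nonneg (v : Fin n → ℝ) : 0 ≤ nrm v := Real.sqrt_nonneg _

lemma nrm_sq (v : Fin n → ℝ) : nrm v ^ 2 = ∑ i, v i ^ 2 := by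
  rw [nrm, Real.sq_sqrt (by positivity)]

lemma nrm_eq_sqrt_dot (v : Fin n → ℝ) : nrm v = Real.sqrt (dotR v v) := by
  rw [nrm, dotR_self]

lemma nrm_pos {v : Fin n → ℝ} (hv : v ≠ 0) : 0 < nrm v := by
  rw [nrm]
  apply Real.sqrt_pos.mpr
  by_contra h
  push_neg at h
  have h0 : ∑ i, v i ^ 2 = 0 := le_antisymm h (by positivity)
  refine hv (funext fun i => ?_)
  have hz := (Finset.sum_eq_zero_iff_of_nonneg (fun i _ => sq_nonneg (v i))).mp h0 i
    (Finset.mem_univ i)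
  have : v i = 0 := by nlinarith
  simpa using this

lemma dotR_smul_left (c : ℝ) (u v : Fin n → ℝ) : dotR (c • u) v = c * dotR u v := by
  simp [dotR, Finset.mul_sum, Pi.smul_apply, smul_eq_mul, mul_assoc]

lemma dotR_smul_right (c : ℝ) (u v : Fin n → ℝ) : dotR u (c • v) = c * dotR u v := by
  rw [dotR_comm, dotR_smul_left, dotR_comm]

lemma dotR_sub_left (u w v : Fin n → ℝ) : dotR (u - w) v = dotR u v - dotR w v := by
  simp [dotR, sub_mul, Finset.sum_sub_distrib]

lemma dotR_sub_right (u w v : Fin n → ℝ) : dotR v (u - w) = dotR v u - dotR v w := by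
  rw [dotR_comm, dotR_sub_left, dotR_comm u v, dotR_comm w v]

lemma nrm_smul (c : ℝ) (v : Fin n → ℝ) : nrm (c • v) = |c| * nrm v := by
  simp only [nrm, Pi.smul_apply, smul_eq_mul, mul_pow, ← Finset.mul_sum]
  rw [Real.sqrt_mul (sq_nonneg c), Real.sqrt_sq_eq_abs]

lemma cauchy (u v : Fin n → ℝ) : |dotR u v| ≤ nrm u * nrm v := by
  have h := Finset.sum_mul_sq_le_sq_mul_sq Finset.univ u v
  calc |dotR u v| = Real.sqrt (dotR u v ^ 2) := (Real.sqrt_sq_eq_abs _).symm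
    _ ≤ Real.sqrt ((∑ i, u i ^ 2) * ∑ i, v i ^ 2) := Real.sqrt_le_sqrt h
    _ = nrm u * nrm v := by
        rw [Real.sqrt_mul (by positivity)]; rfl

lemma le_of_sq_le_sq' {x y : ℝ} (hx : 0 ≤ x) (hy : 0 ≤ y) (h : x ^ 2 ≤ y ^ 2) : x ≤ y := by
  calc x = Real.sqrt (x ^ 2) := (Real.sqrt_sq hx).symm
    _ ≤ Real.sqrt (y ^ 2) := Real.sqrt_le_sqrt h
    _ = y := Real.sqrt_sq hy

/-- Key geometric lemma: angle triangle inequality via Cauchy-Schwarz on projections. -/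
lemma key_geom (u v w : Fin n → ℝ) (hu : dotR u u = 1) (hv : dotR v v = 1) (hw : dotR w w = 1) :
    |dotR u v| * |dotR v w| -
      Real.sqrt (1 - |dotR u v| ^ 2) * Real.sqrt (1 - |dotR v w| ^ 2) ≤ |dotR u w| := by
  set p := dotR u v with hp
  set q := dotR v w with hq
  set r := dotR u w with hr
  have hCS : |dotR (u - p • v) (w - q • v)| ≤ nrm (u - p • v) * nrm (w - q • v) := cauchy _ _
  have e1 : dotR (u - p • v) (w - q • v) = r - p * q := by
    rw [dotR_sub_left, dotR_sub_right, dotR_sub_right, dotR_smul_left, dotR_smul_right,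
      dotR_smul_right, dotR_smul_left, hv]
    simp only [hp, hq, hr, dotR_comm w v]
    ring
  have e2 : nrm (u - p • v) = Real.sqrt (1 - p ^ 2) := by
    rw [nrm_eq_sqrt_dot, dotR_sub_left, dotR_sub_right, dotR_sub_right, dotR_smul_left,
      dotR_smul_right, dotR_smul_right, dotR_smul_left, hu, hv]
    congr 1
    simp only [hp, dotR_comm v u]
    ring
  have e3 : nrm (w - q • v) = Real.sqrt (1 - q ^ 2) := by
    rw [nrm_eq_sqrt_dot, dotR_sub_left, dotR_sub_right, dotR_sub_right, dotR_smul_left,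
      dotR_smul_right, dotR_smul_right, dotR_smul_left, hw, hv]
    congr 1
    simp only [hq, dotR_comm w v]
    ring
  rw [e1, e2, e3] at hCS
  have habs : |p * q| ≤ |r - p * q| + |r| := by
    calc |p * q| = |(p * q - r) + r| := by ring_nf
      _ ≤ |p * q - r| + |r| := abs_add_le _ _
      _ = |r - p * q| + |r| := by rw [abs_sub_comm]
  rw [sq_abs, sq_abs, ← abs_mul]
  linarith

/-- The core scalar inequality: with `δ = √(1-a²) - √(1-s²)` and `0 < a ≤ s ≤ c ≤ 1`,
`√(1-δ²)·c - δ·√(1-c²) ≥ a`. -/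
lemma scalar_main {a s c : ℝ} (ha : 0 < a) (has : a ≤ s) (hsc : s ≤ c) (hc1 : c ≤ 1) :
    a ≤ Real.sqrt (1 - (Real.sqrt (1 - a^2) - Real.sqrt (1 - s^2))^2) * c
        - (Real.sqrt (1 - a^2) - Real.sqrt (1 - s^2)) * Real.sqrt (1 - c^2) := by
  set A := Real.sqrt (1 - a^2) with hA
  set S := Real.sqrt (1 - s^2) with hS
  set C := Real.sqrt (1 - c^2) with hC
  have ha1 : a ≤ 1 := le_trans has (le_trans hsc hc1)
  have hs1 : s ≤ 1 := le_trans hsc hc1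
  have hs0 : 0 < s := lt_of_lt_of_le ha has
  have hc0 : 0 < c := lt_of_lt_of_le hs0 hsc
  have hA2 : A^2 = 1 - a^2 := Real.sq_sqrt (by nlinarith)
  have hS2 : S^2 = 1 - s^2 := Real.sq_sqrt (by nlinarith)
  have hC2 : C^2 = 1 - c^2 := Real.sq_sqrt (by nlinarith)
  have hA0 : 0 ≤ A := Real.sqrt_nonneg _
  have hS0 : 0 ≤ S := Real.sqrt_nonneg _
  have hC0 : 0 ≤ C := Real.sqrt_nonneg _
  have hδ0 : 0 ≤ A - S := by
    have := Real.sqrt_le_sqrt (show 1 - s^2 ≤ 1 - a^2 by nlinarith)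
    rw [← hA, ← hS] at this
    linarith
  have hCS : C ≤ S := by
    have := Real.sqrt_le_sqrt (show 1 - c^2 ≤ 1 - s^2 by nlinarith)
    rw [← hS, ← hC] at this
    exact this
  have hD0 : 0 ≤ A*s - a*S := by
    have h1 : (a*S)^2 ≤ (A*s)^2 := by nlinarith
    have h2 := le_of_sq_le_sq' (mul_nonneg ha.le hS0) (mul_nonneg hA0 hs0.le) h1
    linarith
  have hδD : A - S ≤ A*s - a*S := by
    have h1 : (A*(1-s))^2 ≤ (S*(1-a))^2 := by
      nlinarith [mul_nonneg (mul_nonneg (sub_nonneg.2 ha1) (sub_nonneg.2 hs1))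
        (sub_nonneg.2 has)]
    have h2 := le_of_sq_le_sq' (mul_nonneg hA0 (by linarith)) (mul_nonneg hS0 (by linarith)) h1
    nlinarith [h2]
  have hid : (a*s + A*S)^2 + (A*s - a*S)^2 = 1 := by
    linear_combination (s^2 + S^2) * hA2 + hS2
  have hsum0 : 0 ≤ a*s + A*S :=
    add_nonneg (mul_nonneg ha.le hs0.le) (mul_nonneg hA0 hS0)
  have hδ2 : (A - S)^2 ≤ (A*s - a*S)^2 := pow_le_pow_left₀ hδ0 hδD 2
  have hsqrt : a*s + A*S ≤ Real.sqrt (1 - (A - S)^2) := by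
    have h1 : (a*s + A*S)^2 ≤ 1 - (A-S)^2 := by linarith [hid, hδ2]
    calc a*s + A*S = Real.sqrt ((a*s+A*S)^2) := (Real.sqrt_sq hsum0).symm
      _ ≤ _ := Real.sqrt_le_sqrt h1
  have hfin : a ≤ (a*s + A*S)*c - (A*s - a*S)*C := by
    have h1 : (a*s + A*S)*s ≤ (a*s + A*S)*c := mul_le_mul_of_nonneg_left hsc hsum0
    have h2 : (A*s - a*S)*C ≤ (A*s - a*S)*S := mul_le_mul_of_nonneg_left hCS hD0
    have h3 : (a*s + A*S)*s - (A*s - a*S)*S = a := by linear_combination a * hS2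
    linarith
  have hmul : (a*s+A*S)*c ≤ Real.sqrt (1 - (A-S)^2) * c :=
    mul_le_mul_of_nonneg_right hsqrt hc0.le
  have hmul2 : (A-S)*C ≤ (A*s - a*S)*C := mul_le_mul_of_nonneg_right hδD hC0
  linarith

end Aux

/-- if `0 < α ≤ 1` and `α ≤ σ(X)`, then `v_α(X) ≤ ρ_α(X)`. -/
theorem vX_le_rhoX {n N : ℕ} (hN : 0 < N)
    (x : Fin N → Fin n → ℝ) (hx : ∀ t, x t ≠ 0)
    (a : ℝ) (ha : 0 < a) (ha1 : a ≤ 1) (haσ : a ≤ sigmaX x) :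
    vX x a ≤ rhoX x a := by
  haveI : Nonempty (Fin N) := ⟨⟨0, hN⟩⟩
  rcases Nat.eq_zero_or_pos n with hn | hn
  · exfalso
    apply hx ⟨0, hN⟩
    funext i
    subst hn
    exact i.elim0
  have hnt : ∀ t, nrm (ntild x t) = 1 := by
    intro t
    rw [ntild, nrm_smul, abs_of_nonneg (inv_nonneg.mpr (nrm_nonneg _)),
      inv_mul_cancel₀ (ne_of_gt (nrm_pos (hx t)))]
  have hntd : ∀ t, dotR (ntild x t) (ntild x t) = 1 := by
    intro t
    rw [dotR_self, ← nrm_sq, hnt t]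
    norm_num
  simp only [vX, rhoX]
  have hN0 : (0:ℝ) ≤ 1 / N := by positivity
  apply mul_le_mul_of_nonneg_left _ hN0
  have hbdd : BddBelow (Set.range fun t : Fin N => ((Jset x a t).card : ℝ)) :=
    ⟨0, by rintro _ ⟨t, rfl⟩; positivity⟩
  apply le_csInf
  · refine ⟨((Iset x a (fun _ => 1)).card : ℝ), ⟨(fun _ => 1), ?_, rfl⟩⟩
    intro h0
    have := congrFun h0 ⟨0, hn⟩
    norm_num at this
  rintro b ⟨η, hη, rfl⟩
  set η' : Fin n → ℝ := (nrm η)⁻¹ • η with hη'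
  have hηpos : 0 < nrm η := nrm_pos hη
  have hη'1 : nrm η' = 1 := by
    rw [hη', nrm_smul, abs_of_nonneg (inv_nonneg.mpr (nrm_nonneg _)),
      inv_mul_cancel₀ (ne_of_gt hηpos)]
  have hw : dotR η' η' = 1 := by
    rw [dotR_self, ← nrm_sq, hη'1]
    norm_num
  obtain ⟨t₀, -, ht₀⟩ := Finset.exists_max_image Finset.univ
    (fun t => |dotR (ntild x t) η'|) ⟨⟨0, hN⟩, Finset.mem_univ _⟩
  have hσle : sigmaX x ≤ |dotR (ntild x t₀) η'| := by
    have h1 : sigmaX x ≤ ⨆ t : Fin N, |dotR (ntild x t) η'| := by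
      apply csInf_le
      · refine ⟨0, ?_⟩
        rintro _ ⟨θ, hθ, rfl⟩
        show (0:ℝ) ≤ ⨆ t : Fin N, |dotR (ntild x t) θ|
        exact le_trans (abs_nonneg (dotR (ntild x ⟨0, hN⟩) θ))
          (le_ciSup (f := fun t : Fin N => |dotR (ntild x t) θ|)
            (Set.Finite.bddAbove (Set.finite_range _)) ⟨0, hN⟩)
      · exact ⟨η', hη'1, rfl⟩
    exact le_trans h1 (ciSup_le fun t => ht₀ t (Finset.mem_univ t))
  have hc1 : |dotR (ntild x t₀) η'| ≤ 1 := by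
    have h := cauchy (ntild x t₀) η'
    rw [hnt t₀, hη'1] at h
    simpa using h
  set c := |dotR (ntild x t₀) η'| with hcdef
  have hsub : Jset x a t₀ ⊆ Iset x a η := by
    intro k hk
    rw [Jset, Finset.mem_filter] at hk
    rw [Iset, Finset.mem_filter]
    refine ⟨Finset.mem_univ _, ?_⟩
    have hgoal : a ≤ |dotR (ntild x k) η'| := by
      have hkey := key_geom (ntild x k) (ntild x t₀) η' (hntd k) (hntd t₀) hw
      rw [← hcdef] at hkey
      set P := |dotR (ntild x k) (ntild x t₀)| with hP
      have hkJ : Real.sqrt (1 - deltaX x a ^ 2) ≤ P := hk.2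
      set d := deltaX x a with hd
      have hscal : a ≤ Real.sqrt (1 - d ^ 2) * c - d * Real.sqrt (1 - c ^ 2) := by
        rw [hd]
        simp only [deltaX]
        exact scalar_main ha haσ hσle hc1
      have hd0 : 0 ≤ d := by
        rw [hd]
        simp only [deltaX]
        have h1 : Real.sqrt (1 - sigmaX x ^ 2) ≤ Real.sqrt (1 - a ^ 2) := by
          apply Real.sqrt_le_sqrt
          nlinarith [haσ, ha.le]
        linarith
      have hd1 : d ≤ 1 := by
        rw [hd]
        simp only [deltaX]
        have h1 : Real.sqrt (1 - a ^ 2) ≤ 1 := Real.sqrt_le_one.mpr (by nlinarith)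
        have h2 := Real.sqrt_nonneg (1 - sigmaX x ^ 2)
        linarith
      have hP1 : P ≤ 1 := by
        have h := cauchy (ntild x k) (ntild x t₀)
        rw [hnt k, hnt t₀] at h
        rw [hP]
        simpa using h
      have hPd : Real.sqrt (1 - P ^ 2) ≤ d := by
        have h2 : Real.sqrt (1 - d ^ 2) ^ 2 ≤ P ^ 2 :=
          pow_le_pow_left₀ (Real.sqrt_nonneg _) hkJ 2
        have h4 : Real.sqrt (1 - d ^ 2) ^ 2 = 1 - d ^ 2 := Real.sq_sqrt (by nlinarith)
        have h1 : 1 - P ^ 2 ≤ d ^ 2 := by linarith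
        calc Real.sqrt (1 - P ^ 2) ≤ Real.sqrt (d ^ 2) := Real.sqrt_le_sqrt h1
          _ = d := Real.sqrt_sq hd0
      have hPc : Real.sqrt (1 - d ^ 2) * c ≤ P * c :=
        mul_le_mul_of_nonneg_right hkJ (abs_nonneg _)
      have hqc : Real.sqrt (1 - P ^ 2) * Real.sqrt (1 - c ^ 2) ≤ d * Real.sqrt (1 - c ^ 2) :=
        mul_le_mul_of_nonneg_right hPd (Real.sqrt_nonneg _)
      linarith [hkey, hscal, hPc, hqc]
    have hdot : dotR (ntild x k) η' = (nrm (x k))⁻¹ * ((nrm η)⁻¹ * dotR (x k) η) := by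
      rw [hη', ntild, dotR_smul_left, dotR_smul_right]
    have h5 : |dotR (ntild x k) η'| = (nrm (x k))⁻¹ * (nrm η)⁻¹ * |dotR (x k) η| := by
      rw [hdot, abs_mul, abs_mul, abs_of_nonneg (inv_nonneg.mpr (nrm_nonneg (x k))),
        abs_of_nonneg (inv_nonneg.mpr (nrm_nonneg η))]
      ring
    rw [h5] at hgoal
    have hmm := mul_le_mul_of_nonneg_left hgoal (mul_pos (nrm_pos (hx k)) hηpos).le
    calc a * nrm (x k) * nrm η = (nrm (x k) * nrm η) * a := by ring
      _ ≤ (nrm (x k) * nrm η) * ((nrm (x k))⁻¹ * (nrm η)⁻¹ * |dotR (x k) η|) := hmm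
      _ = |dotR (x k) η| := by
          have h1 : nrm (x k) ≠ 0 := ne_of_gt (nrm_pos (hx k))
          have h2 : nrm η ≠ 0 := ne_of_gt hηpos
          field_simp
  calc (⨅ t : Fin N, ((Jset x a t).card : ℝ)) ≤ ((Jset x a t₀).card : ℝ) := ciInf_le hbdd t₀
    _ ≤ ((Iset x a η).card : ℝ) := Nat.cast_le.mpr (Finset.card_le_card hsub)
end
end

section
/- Let x_1,…,x_N ∈ ℝⁿ be nonzero vectors, r_x = min_t ‖x_t‖₂, and let y_t = x_tᵀθ° + v_t for t = 1,…,N. Let ε ≥ 0, I_ε^0 = {t : |v_t| ≤ ε}, and let ℓ : ℝ → [0,∞) satisfy properties P1–P4 with constant α_ℓ > 0. Let γ > 0, α ∈ (0,1], and let θ* be any maximizer over ℝⁿ of θ ↦ ∑_{k=1}^N exp(−γℓ(y_k − x_kᵀθ)). Set η* = θ* − θ°. Then e^{−γℓ(ε)}·(|I_ε^0|·e^{−γℓ(ε)} + |I_ε^0| − N) − |I_ε^0| ≤ |I_ε^0 ∩ 𝓘_α(X, η*)|·(exp(−γ·α_ℓ·ℓ(α·r_x·‖η*‖₂)) − 1).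 -/
open scoped BigOperators

noncomputable section

/-- the key inequality in the proof of the main theorem. -/
theorem mce_key_inequality {n N : ℕ} (hN : 0 < N)
    (x : Fin N → Fin n → ℝ) (hx : ∀ t, x t ≠ 0)
    (θo : Fin n → ℝ) (v y : Fin N → ℝ)
    (hy : ∀ t, y t = dotR (x t) θo + v t)
    (ε : ℝ) (hε : 0 ≤ ε)
    (ℓ : ℝ → ℝ) (αl : ℝ) (hαl : 0 < αl)
    (hP1 : ∀ a, 0 ≤ ℓ a) (hP1' : ∀ a, ℓ a = 0 ↔ a = 0)
    (hP2 : ∀ a, ℓ (-a) = ℓ a)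
    (hP3 : ∀ a b, |a| ≤ |b| → ℓ a ≤ ℓ b)
    (hP4 : ∀ a b, αl * ℓ a - ℓ b ≤ ℓ (a - b))
    (γ : ℝ) (hγ : 0 < γ) (a : ℝ) (ha : 0 < a) (ha1 : a ≤ 1)
    (θs : Fin n → ℝ)
    (hmax : ∀ θ : Fin n → ℝ,
      ∑ k, Real.exp (-(γ * ℓ (y k - dotR (x k) θ))) ≤
        ∑ k, Real.exp (-(γ * ℓ (y k - dotR (x k) θs)))) :
    Real.exp (-(γ * ℓ ε)) *
        (((Finset.univ.filter fun t => |v t| ≤ ε).card : ℝ) * Real.exp (-(γ * ℓ ε)) +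
          ((Finset.univ.filter fun t => |v t| ≤ ε).card : ℝ) - (N : ℝ)) -
        ((Finset.univ.filter fun t => |v t| ≤ ε).card : ℝ) ≤
      ((((Finset.univ.filter fun t => |v t| ≤ ε) ∩ Iset x a (θs - θo)).card : ℝ)) *
        (Real.exp (-(γ * αl * ℓ (a * (⨅ t, nrm (x t)) * nrm (θs - θo)))) - 1) := by
  classical
  haveI : Nonempty (Fin N) := ⟨⟨0, hN⟩⟩
  set η : Fin n → ℝ := θs - θo with hη
  set rx : ℝ := ⨅ t, nrm (x t) with hrx
  set I : Finset (Fin N) := Finset.univ.filter fun t => |v t| ≤ ε with hIdef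
  set S : Finset (Fin N) := I ∩ Iset x a η with hSdef
  set E : ℝ := Real.exp (-(γ * ℓ ε)) with hEdef
  set L : ℝ := ℓ (a * rx * nrm η) with hLdef
  set D : ℝ := Real.exp (-(γ * αl * L)) with hDdef
  have hnrm_nonneg : ∀ t, 0 ≤ nrm (x t) := fun t => Real.sqrt_nonneg _
  have hbdd : BddBelow (Set.range fun t => nrm (x t)) :=
    ⟨0, by rintro _ ⟨t, rfl⟩; exact hnrm_nonneg t⟩
  have hrx_le : ∀ t, rx ≤ nrm (x t) := fun t => ciInf_le hbdd t
  have hrx_nonneg : 0 ≤ rx := le_ciInf hnrm_nonneg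
  have hnη : 0 ≤ nrm η := Real.sqrt_nonneg _
  have hEpos : 0 < E := Real.exp_pos _
  have hE1 : E ≤ 1 := by
    apply Real.exp_le_one_iff.2
    have := hP1 ε
    nlinarith
  have hLnn : 0 ≤ L := hP1 _
  -- Step 1: lower bound
  have key1 : (I.card : ℝ) * E ≤ ∑ k, Real.exp (-(γ * ℓ (y k - dotR (x k) θs))) := by
    have h1 : (I.card : ℝ) * E = ∑ _k ∈ I, E := by
      rw [Finset.sum_const, nsmul_eq_mul]
    rw [h1]
    calc ∑ _k ∈ I, E ≤ ∑ k ∈ I, Real.exp (-(γ * ℓ (y k - dotR (x k) θo))) := by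
          apply Finset.sum_le_sum
          intro k hk
          have hvk : |v k| ≤ ε := by
            simpa [hIdef] using hk
          have harg : y k - dotR (x k) θo = v k := by rw [hy k]; ring
          rw [harg]
          apply Real.exp_le_exp.2
          have hle : ℓ (v k) ≤ ℓ ε := hP3 _ _ (by rwa [abs_of_nonneg hε])
          nlinarith
      _ ≤ ∑ k, Real.exp (-(γ * ℓ (y k - dotR (x k) θo))) := by
          apply Finset.sum_le_sum_of_subset_of_nonneg (Finset.subset_univ _)
          intro k _ _
          exact (Real.exp_pos _).le
      _ ≤ ∑ k, Real.exp (-(γ * ℓ (y k - dotR (x k) θs))) := hmax θo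
  -- Step 2: upper bound
  have hScard : S.card ≤ N := by
    calc S.card ≤ Finset.univ.card := Finset.card_le_univ S
      _ = N := by simp
  have key2 : ∑ k, Real.exp (-(γ * ℓ (y k - dotR (x k) θs))) ≤
      (S.card : ℝ) * (E⁻¹ * D) + ((N : ℝ) - S.card) := by
    have hsplit : ∑ k, Real.exp (-(γ * ℓ (y k - dotR (x k) θs))) =
        (∑ k ∈ S, Real.exp (-(γ * ℓ (y k - dotR (x k) θs)))) +
        (∑ k ∈ Finset.univ \ S, Real.exp (-(γ * ℓ (y k - dotR (x k) θs)))) := by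
      rw [← Finset.sum_sdiff (Finset.subset_univ S)]; ring
    rw [hsplit]
    have hEinv : E⁻¹ = Real.exp (γ * ℓ ε) := by
      rw [hEdef, ← Real.exp_neg, neg_neg]
    have hbS : ∑ k ∈ S, Real.exp (-(γ * ℓ (y k - dotR (x k) θs))) ≤ (S.card : ℝ) * (E⁻¹ * D) := by
      have hb : ∀ k ∈ S, Real.exp (-(γ * ℓ (y k - dotR (x k) θs))) ≤ E⁻¹ * D := by
        intro k hk
        have hk' : |v k| ≤ ε ∧ a * nrm (x k) * nrm η ≤ |dotR (x k) η| := by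
          simpa [hSdef, hIdef, Iset, Finset.mem_inter, Finset.mem_filter] using hk
        obtain ⟨hv, hd⟩ := hk'
        have hd2 : dotR (x k) η = dotR (x k) θs - dotR (x k) θo := by
          simp [hη, dotR, Pi.sub_apply, mul_sub, Finset.sum_sub_distrib]
        have harg : y k - dotR (x k) θs = v k - dotR (x k) η := by
          rw [hy k, hd2]; ring
        have h1 : αl * ℓ (dotR (x k) η) - ℓ (v k) ≤ ℓ (y k - dotR (x k) θs) := by
          have h := hP4 (dotR (x k) η) (v k)
          have heq : ℓ (dotR (x k) η - v k) = ℓ (v k - dotR (x k) η) := by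
            rw [← hP2, neg_sub]
          rw [heq] at h
          rw [harg]
          exact h
        have hL_le : L ≤ ℓ (dotR (x k) η) := by
          apply hP3
          rw [abs_of_nonneg (by positivity)]
          calc a * rx * nrm η ≤ a * nrm (x k) * nrm η := by
                apply mul_le_mul_of_nonneg_right _ hnη
                exact mul_le_mul_of_nonneg_left (hrx_le k) ha.le
            _ ≤ |dotR (x k) η| := hd
        have hvε : ℓ (v k) ≤ ℓ ε := hP3 _ _ (by rwa [abs_of_nonneg hε])
        rw [hEinv, hDdef, ← Real.exp_add]
        apply Real.exp_le_exp.2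
        have q1 := mul_le_mul_of_nonneg_left h1 hγ.le
        have q2 := mul_le_mul_of_nonneg_left hL_le (mul_nonneg hγ.le hαl.le)
        have q3 := mul_le_mul_of_nonneg_left hvε hγ.le
        nlinarith
      calc ∑ k ∈ S, Real.exp (-(γ * ℓ (y k - dotR (x k) θs))) ≤ ∑ _k ∈ S, (E⁻¹ * D) :=
            Finset.sum_le_sum hb
        _ = (S.card : ℝ) * (E⁻¹ * D) := by rw [Finset.sum_const, nsmul_eq_mul]
    have hbC : ∑ k ∈ Finset.univ \ S, Real.exp (-(γ * ℓ (y k - dotR (x k) θs))) ≤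
        ((N : ℝ) - S.card) := by
      have hb : ∀ k ∈ Finset.univ \ S, Real.exp (-(γ * ℓ (y k - dotR (x k) θs))) ≤ 1 := by
        intro k _
        apply Real.exp_le_one_iff.2
        have := hP1 (y k - dotR (x k) θs)
        nlinarith
      calc ∑ k ∈ Finset.univ \ S, Real.exp (-(γ * ℓ (y k - dotR (x k) θs)))
          ≤ ∑ _k ∈ Finset.univ \ S, (1 : ℝ) := Finset.sum_le_sum hb
        _ = ((Finset.univ \ S).card : ℝ) := by simp
        _ = ((N : ℝ) - S.card) := by
            rw [Finset.card_sdiff_of_subset (Finset.subset_univ S), Finset.card_univ, Fintype.card_fin,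
              Nat.cast_sub hScard]
    linarith
  have key : (I.card : ℝ) * E ≤ (S.card : ℝ) * (E⁻¹ * D) + ((N : ℝ) - S.card) :=
    le_trans key1 key2
  have hcm : (S.card : ℝ) ≤ (I.card : ℝ) := by
    exact_mod_cast Finset.card_le_card (Finset.inter_subset_left)
  have h3 : (I.card : ℝ) * E * E ≤ (S.card : ℝ) * D + ((N : ℝ) - S.card) * E := by
    calc (I.card : ℝ) * E * E ≤ ((S.card : ℝ) * (E⁻¹ * D) + ((N : ℝ) - S.card)) * E :=
          mul_le_mul_of_nonneg_right key hEpos.le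
      _ = (S.card : ℝ) * D + ((N : ℝ) - S.card) * E := by
          field_simp
  have h5 : ((I.card : ℝ) - S.card) * E ≤ (I.card : ℝ) - S.card := by
    nlinarith
  nlinarith
end
end

section
/- Let x_1,…,x_N ∈ ℝⁿ be nonzero vectors, r_x = min_t ‖x_t‖₂ > 0, and let y_t = x_tᵀθ° + v_t for t = 1,…,N with θ° ∈ ℝⁿ. Let ε ≥ 0, I_ε^0 = {t : |v_t| ≤ ε}, and let ℓ : ℝ → [0,∞) satisfy properties P1–P4 with constant α_ℓ > 0. Let γ > 0 and α ∈ (0,1], and assume the stability condition ρ_α(X)/(1 + e^{−γℓ(ε)}) + e^{−γℓ(ε)}·|I_ε^0|/N > 1. Then for any maximizer θ* over ℝⁿ of θ ↦ ∑_{k=1}^N exp(−γℓ(y_k − x_kᵀθ)), it holds that ℓ(α·r_x·‖θ* − θ°‖₂) ≤ (1/(γ·α_ℓ))·ln(1/μ_ℓ), where μ_ℓ = [(1+e^{−γℓ(ε)})/(|I_ε^0|/N + ρ_α(X) − 1)]·[ρ_α(X)/(1+e^{−γℓ(ε)}) + e^{−γℓ(ε)}·|I_ε^0|/N − 1]. 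-/
open scoped BigOperators

noncomputable section

/-- The constant `μ` as a function of `s = e^{-γℓ(ε)}`, `q = |I_ε^0|/N` and `ρ = ρ_α(X)`. -/
def muVal (s q ρ : ℝ) : ℝ := (1 + s) / (q + ρ - 1) * (ρ / (1 + s) + s * q - 1)

lemma dotR_sub {n : ℕ} (u v w : Fin n → ℝ) : dotR u (v - w) = dotR u v - dotR u w := by
  simp [dotR, mul_sub, Finset.sum_sub_distrib]

set_option maxHeartbeats 1600000 in
/-- the main theorem, bounding `ℓ(α r_x ‖θ* − θ°‖₂)`. -/
theorem mce_main_theorem {n N : ℕ} (hN : 0 < N)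
    (x : Fin N → Fin n → ℝ) (hx : ∀ t, x t ≠ 0)
    (θo : Fin n → ℝ) (v y : Fin N → ℝ)
    (hy : ∀ t, y t = dotR (x t) θo + v t)
    (ε : ℝ) (hε : 0 ≤ ε)
    (ℓ : ℝ → ℝ) (αl : ℝ) (hαl : 0 < αl)
    (hP1 : ∀ a, 0 ≤ ℓ a) (hP1' : ∀ a, ℓ a = 0 ↔ a = 0)
    (hP2 : ∀ a, ℓ (-a) = ℓ a)
    (hP3 : ∀ a b, |a| ≤ |b| → ℓ a ≤ ℓ b)
    (hP4 : ∀ a b, αl * ℓ a - ℓ b ≤ ℓ (a - b))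
    (γ : ℝ) (hγ : 0 < γ) (a : ℝ) (ha : 0 < a) (ha1 : a ≤ 1)
    (hstab : 1 <
      rhoX x a / (1 + Real.exp (-(γ * ℓ ε))) +
        Real.exp (-(γ * ℓ ε)) *
          (((Finset.univ.filter fun t => |v t| ≤ ε).card : ℝ) / N))
    (θs : Fin n → ℝ)
    (hmax : ∀ θ : Fin n → ℝ,
      ∑ k, Real.exp (-(γ * ℓ (y k - dotR (x k) θ))) ≤
        ∑ k, Real.exp (-(γ * ℓ (y k - dotR (x k) θs)))) :
    ℓ (a * (⨅ t, nrm (x t)) * nrm (θs - θo)) ≤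
      (1 / (γ * αl)) *
        Real.log (1 /
          muVal (Real.exp (-(γ * ℓ ε)))
            (((Finset.univ.filter fun t => |v t| ≤ ε).card : ℝ) / N)
            (rhoX x a)) := by
  have hNR : (0:ℝ) < N := by exact_mod_cast hN
  set s : ℝ := Real.exp (-(γ * ℓ ε)) with hs_def
  set I0 : Finset (Fin N) := Finset.univ.filter (fun t => |v t| ≤ ε) with hI0_def
  set q : ℝ := ((I0.card : ℝ) / N) with hq_def
  set ρ : ℝ := rhoX x a with hρ_def
  have hs0 : 0 < s := Real.exp_pos _
  have hs1 : s ≤ 1 := by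
    rw [hs_def]
    exact Real.exp_le_one_iff.mpr (neg_nonpos.mpr (mul_nonneg hγ.le (hP1 ε)))
  have hq0 : 0 ≤ q := by
    rw [hq_def]; positivity
  have hq1 : q ≤ 1 := by
    rw [hq_def, div_le_one hNR]
    have : I0.card ≤ N := by
      calc I0.card ≤ (Finset.univ : Finset (Fin N)).card := Finset.card_le_univ _
        _ = N := by simp
    exact_mod_cast this
  have h1s : (0:ℝ) < 1 + s := by linarith
  have hρ_gt : (1 - s*q) * (1+s) < ρ := by
    have h2 : 1 - s*q < ρ/(1+s) := by linarith [hstab]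
    exact (lt_div_iff₀ h1s).mp h2
  have hD : 0 < q + ρ - 1 := by
    nlinarith [mul_nonneg (mul_nonneg hs0.le hs0.le) (sub_nonneg.mpr hq1),
      mul_nonneg (sub_nonneg.mpr hs1) (add_nonneg hq0 hs0.le)]
  have hnum : 0 < ρ/(1+s) + s*q - 1 := by linarith [hstab]
  have hμ_pos : 0 < muVal s q ρ := mul_pos (div_pos h1s hD) hnum
  have hμD : muVal s q ρ * (q + ρ - 1) = ρ + (1+s)*(s*q-1) := by
    unfold muVal
    field_simp
    ring
  have hμ1 : muVal s q ρ ≤ 1 := by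
    have h1 : muVal s q ρ * (q + ρ - 1) ≤ 1 * (q + ρ - 1) := by
      rw [hμD]
      nlinarith [mul_nonneg hq0 (sub_nonneg.mpr hs1),
        mul_nonneg hs0.le (mul_nonneg hq0 hs0.le),
        mul_nonneg (mul_nonneg hq0 hs0.le) (sub_nonneg.mpr hs1)]
    exact le_of_mul_le_mul_right h1 hD
  -- final step helper
  have hfin : ∀ {L : ℝ}, 0 ≤ L → muVal s q ρ ≤ Real.exp (-(γ * αl * L)) →
      L ≤ (1 / (γ * αl)) * Real.log (1 / muVal s q ρ) := by
    intro L hL0 hμE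
    have hlog : Real.log (muVal s q ρ) ≤ -(γ * αl * L) := by
      calc Real.log (muVal s q ρ) ≤ Real.log (Real.exp (-(γ * αl * L))) :=
            Real.log_le_log hμ_pos hμE
        _ = -(γ * αl * L) := Real.log_exp _
    have hc : (0:ℝ) < γ * αl := mul_pos hγ hαl
    rw [one_div (muVal s q ρ), Real.log_inv]
    have h2 : γ * αl * L ≤ -Real.log (muVal s q ρ) := by linarith
    calc L = (1 / (γ * αl)) * (γ * αl * L) := by field_simp
      _ ≤ (1 / (γ * αl)) * -Real.log (muVal s q ρ) :=
          mul_le_mul_of_nonneg_left h2 (by positivity)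
  by_cases hδ : θs - θo = 0
  · -- degenerate case: θ* = θ°
    have hn0 : nrm (θs - θo) = 0 := by rw [hδ]; simp [nrm]
    have hL : ℓ (a * (⨅ t, nrm (x t)) * nrm (θs - θo)) = 0 := by
      rw [hn0, mul_zero]; exact (hP1' 0).mpr rfl
    rw [hL]
    have := hfin (le_refl (0:ℝ)) (by
      rw [mul_zero, neg_zero, Real.exp_zero]; exact hμ1)
    simpa using this
  · -- main case
    set r : ℝ := ⨅ t, nrm (x t) with hr_def
    have hnrm_nonneg : ∀ t, 0 ≤ nrm (x t) := fun t => Real.sqrt_nonneg _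
    have hr0 : 0 ≤ r := Real.iInf_nonneg hnrm_nonneg
    have hbdd : BddBelow (Set.range fun t => nrm (x t)) := by
      refine ⟨0, ?_⟩
      rintro _ ⟨t, rfl⟩
      exact hnrm_nonneg t
    have hr_le : ∀ t, r ≤ nrm (x t) := fun t => ciInf_le hbdd t
    set L : ℝ := ℓ (a * r * nrm (θs - θo)) with hL_def
    have hL0 : 0 ≤ L := hP1 _
    set E : ℝ := Real.exp (-(γ * αl * L)) with hE_def
    have hE0 : 0 < E := Real.exp_pos _
    set T : Finset (Fin N) := Iset x a (θs - θo) ∩ I0 with hT_def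
    have hnδ : 0 ≤ nrm (θs - θo) := Real.sqrt_nonneg _
    -- per-term bound on T
    have hterm : ∀ k ∈ T, Real.exp (-(γ * ℓ (y k - dotR (x k) θs))) ≤ E / s := by
      intro k hk
      rw [hT_def, Finset.mem_inter] at hk
      obtain ⟨hk1, hk2⟩ := hk
      rw [Iset, Finset.mem_filter] at hk1
      rw [hI0_def, Finset.mem_filter] at hk2
      have hvk : ℓ (v k) ≤ ℓ ε := by
        apply hP3
        rw [abs_of_nonneg hε]
        exact hk2.2
      have hdk : L ≤ ℓ (dotR (x k) (θs - θo)) := by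
        apply hP3
        rw [abs_of_nonneg (mul_nonneg (mul_nonneg ha.le hr0) hnδ)]
        calc a * r * nrm (θs - θo) ≤ a * nrm (x k) * nrm (θs - θo) := by
              apply mul_le_mul_of_nonneg_right _ hnδ
              exact mul_le_mul_of_nonneg_left (hr_le k) ha.le
          _ ≤ |dotR (x k) (θs - θo)| := hk1.2
      have hyk : y k - dotR (x k) θs = -(dotR (x k) (θs - θo) - v k) := by
        rw [hy k, dotR_sub]; ring
      have hlow : αl * L - ℓ ε ≤ ℓ (y k - dotR (x k) θs) := by
        rw [hyk, hP2]
        calc αl * L - ℓ ε ≤ αl * ℓ (dotR (x k) (θs - θo)) - ℓ (v k) := by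
              nlinarith [mul_le_mul_of_nonneg_left hdk hαl.le]
          _ ≤ ℓ (dotR (x k) (θs - θo) - v k) := hP4 _ _
      have : E / s = Real.exp (-(γ * αl * L) - -(γ * ℓ ε)) := by
        rw [Real.exp_sub]
      rw [this]
      apply Real.exp_le_exp.mpr
      nlinarith [mul_le_mul_of_nonneg_left hlow hγ.le]
    -- per-term bound everywhere
    have hterm1 : ∀ k, Real.exp (-(γ * ℓ (y k - dotR (x k) θs))) ≤ 1 := by
      intro k
      exact Real.exp_le_one_iff.mpr (neg_nonpos.mpr (mul_nonneg hγ.le (hP1 (y k - dotR (x k) θs))))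
    -- upper bound on objective at θs
    have hTcard : T.card ≤ N := by
      calc T.card ≤ (Finset.univ : Finset (Fin N)).card := Finset.card_le_univ _
        _ = N := by simp
    have hup : ∑ k, Real.exp (-(γ * ℓ (y k - dotR (x k) θs)))
        ≤ (T.card : ℝ) * (E / s) + ((N : ℝ) - T.card) := by
      rw [← Finset.sum_add_sum_compl T (fun k => Real.exp (-(γ * ℓ (y k - dotR (x k) θs))))]
      have h1 : ∑ k ∈ T, Real.exp (-(γ * ℓ (y k - dotR (x k) θs))) ≤ (T.card : ℝ) * (E / s) := by
        have := Finset.sum_le_card_nsmul T _ (E/s) hterm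
        simpa [nsmul_eq_mul] using this
      have h2 : ∑ k ∈ Tᶜ, Real.exp (-(γ * ℓ (y k - dotR (x k) θs))) ≤ ((N : ℝ) - T.card) := by
        have := Finset.sum_le_card_nsmul Tᶜ _ 1 (fun k _ => hterm1 k)
        have hcc : ((Tᶜ.card : ℝ)) = (N : ℝ) - T.card := by
          rw [Finset.card_compl]
          have : T.card ≤ Fintype.card (Fin N) := Finset.card_le_univ _
          push_cast [Nat.cast_sub this]
          simp
        calc ∑ k ∈ Tᶜ, Real.exp (-(γ * ℓ (y k - dotR (x k) θs))) ≤ (Tᶜ.card : ℝ) * 1 := by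
              simpa [nsmul_eq_mul] using this
          _ = (N : ℝ) - T.card := by rw [mul_one, hcc]
      linarith
    -- lower bound on objective at θs via θo
    have hlow : (I0.card : ℝ) * s ≤ ∑ k, Real.exp (-(γ * ℓ (y k - dotR (x k) θs))) := by
      have h1 : ∀ k ∈ I0, s ≤ Real.exp (-(γ * ℓ (y k - dotR (x k) θo))) := by
        intro k hk
        rw [hI0_def, Finset.mem_filter] at hk
        have hyk : y k - dotR (x k) θo = v k := by rw [hy k]; ring
        rw [hyk, hs_def]
        apply Real.exp_le_exp.mpr
        have : ℓ (v k) ≤ ℓ ε := by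
          apply hP3
          rw [abs_of_nonneg hε]
          exact hk.2
        nlinarith [mul_le_mul_of_nonneg_left this hγ.le]
      calc (I0.card : ℝ) * s = ∑ _k ∈ I0, s := by rw [Finset.sum_const, nsmul_eq_mul]
        _ ≤ ∑ k ∈ I0, Real.exp (-(γ * ℓ (y k - dotR (x k) θo))) := Finset.sum_le_sum h1
        _ ≤ ∑ k, Real.exp (-(γ * ℓ (y k - dotR (x k) θo))) :=
            Finset.sum_le_sum_of_subset_of_nonneg (Finset.subset_univ _)
              (fun k _ _ => (Real.exp_pos _).le)
        _ ≤ ∑ k, Real.exp (-(γ * ℓ (y k - dotR (x k) θs))) := hmax θo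
    -- cardinality bounds
    have hcardIq : (I0.card : ℝ) = q * N := by
      rw [hq_def]; field_simp
    have hinter : ((Iset x a (θs - θo)).card : ℝ) + I0.card ≤ (N : ℝ) + T.card := by
      have h1 := Finset.card_union_add_card_inter (Iset x a (θs - θo)) I0
      have h2 : ((Iset x a (θs - θo)) ∪ I0).card ≤ N := by
        calc ((Iset x a (θs - θo)) ∪ I0).card ≤ (Finset.univ : Finset (Fin N)).card :=
              Finset.card_le_univ _
          _ = N := by simp
      have : (Iset x a (θs - θo)).card + I0.card ≤ N + T.card := by
        rw [hT_def, ← h1]; omega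
      exact_mod_cast this
    have hρN : ρ * N ≤ ((Iset x a (θs - θo)).card : ℝ) := by
      have hmem : ((Iset x a (θs - θo)).card : ℝ) ∈
          ((fun η : Fin n → ℝ => ((Iset x a η).card : ℝ)) '' {η | η ≠ 0}) :=
        ⟨θs - θo, hδ, rfl⟩
      have hbd : BddBelow ((fun η : Fin n → ℝ => ((Iset x a η).card : ℝ)) '' {η | η ≠ 0}) := by
        refine ⟨0, ?_⟩
        rintro _ ⟨η, _, rfl⟩
        exact Nat.cast_nonneg _
      have hinf := csInf_le hbd hmem
      rw [hρ_def, rhoX]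
      calc (1 / (N:ℝ)) * sInf _ * N = sInf _ := by field_simp
        _ ≤ _ := hinf
    have hρ1 : ρ ≤ 1 := by
      have hcN : ((Iset x a (θs - θo)).card : ℝ) ≤ N := by
        have : (Iset x a (θs - θo)).card ≤ N := by
          calc (Iset x a (θs - θo)).card ≤ (Finset.univ : Finset (Fin N)).card :=
                Finset.card_le_univ _
            _ = N := by simp
        exact_mod_cast this
      nlinarith
    -- combine: m bound
    set m : ℝ := (T.card : ℝ) with hm_def
    have hm0 : 0 ≤ m := Nat.cast_nonneg _
    have hmD : (q + ρ - 1) * N ≤ m := by nlinarith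
    have hkey : q * N * s ≤ m * (E / s) + ((N : ℝ) - m) := by
      rw [← hcardIq]
      calc (I0.card : ℝ) * s ≤ ∑ k, Real.exp (-(γ * ℓ (y k - dotR (x k) θs))) := hlow
        _ ≤ m * (E / s) + ((N : ℝ) - m) := hup
    -- derive μ ≤ E
    have hμE : muVal s q ρ ≤ E := by
      rcases le_or_gt s E with hEs | hEs
      · -- E ≥ s : μ ≤ s ≤ E
        have h1 : muVal s q ρ * (q + ρ - 1) ≤ s * (q + ρ - 1) := by
          rw [hμD]
          nlinarith [mul_nonneg (sub_nonneg.mpr hs1) (sub_nonneg.mpr hρ1),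
            mul_nonneg hs0.le (sub_nonneg.mpr (by nlinarith : s * q ≤ 1))]
        have := le_of_mul_le_mul_right h1 hD
        linarith
      · -- E < s
        have hkey2 : m * (s - E) ≤ s * (N : ℝ) * (1 - s * q) := by
          have h1 : q * N * s * s ≤ m * E + s * ((N:ℝ) - m) := by
            have := mul_le_mul_of_nonneg_right hkey hs0.le
            have hEs' : m * (E / s) * s = m * E := by field_simp
            nlinarith [this, hEs']
          nlinarith
        have hkey3 : (q + ρ - 1) * (s - E) * N ≤ s * (N:ℝ) * (1 - s*q) := by
          have h1 : (q + ρ - 1) * N * (s - E) ≤ m * (s - E) :=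
            mul_le_mul_of_nonneg_right hmD (by linarith)
          nlinarith
        have hkey4 : (q + ρ - 1) * (s - E) ≤ s * (1 - s*q) := by
          have h1 : (q + ρ - 1) * (s - E) * N ≤ s * (1 - s*q) * N := by
            nlinarith
          exact le_of_mul_le_mul_right h1 hNR
        have h1 : muVal s q ρ * (q + ρ - 1) ≤ E * (q + ρ - 1) := by
          rw [hμD]
          nlinarith [mul_nonneg (sub_nonneg.mpr hs1) (sub_nonneg.mpr hρ1)]
        exact le_of_mul_le_mul_right h1 hD
    exact hfin hL0 hμE
end
end

section
/- (Gaussian kernel bound) Let x_1,…,x_N ∈ ℝⁿ be nonzero, r_x = min_t ‖x_t‖₂ > 0, y_t = x_tᵀθ° + v_t, ε ≥ 0, I_ε^0 = {t : |v_t| ≤ ε}, γ₂ > 0 and α ∈ (0,1]. Assume ρ_α(X)/(1 + e^{−γ₂ε²}) + e^{−γ₂ε²}·|I_ε^0|/N > 1. Then for any maximizer θ* over ℝⁿ of θ ↦ ∑_{k=1}^N exp(−γ₂(y_k − x_kᵀθ)²), it holds that ‖θ* − θ°‖₂ ≤ (1/(α·r_x))·√((2/γ₂)·ln(1/μ)),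 where μ = [(1+e^{−γ₂ε²})/(|I_ε^0|/N + ρ_α(X) − 1)]·[ρ_α(X)/(1+e^{−γ₂ε²}) + e^{−γ₂ε²}·|I_ε^0|/N − 1]. -/
open scoped BigOperators

noncomputable section

set_option maxHeartbeats 1600000 in
/-- the error bound for the Gaussian-kernel maximum correntropy
estimator (`ℓ(a) = a²`). -/
theorem mce_gaussian_bound {n N : ℕ} (hN : 0 < N)
    (x : Fin N → Fin n → ℝ) (hx : ∀ t, x t ≠ 0)
    (θo : Fin n → ℝ) (v y : Fin N → ℝ)
    (hy : ∀ t, y t = dotR (x t) θo + v t)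
    (ε : ℝ) (hε : 0 ≤ ε)
    (γ₂ : ℝ) (hγ₂ : 0 < γ₂) (a : ℝ) (ha : 0 < a) (ha1 : a ≤ 1)
    (hstab : 1 <
      rhoX x a / (1 + Real.exp (-(γ₂ * ε ^ 2))) +
        Real.exp (-(γ₂ * ε ^ 2)) *
          (((Finset.univ.filter fun t => |v t| ≤ ε).card : ℝ) / N))
    (θs : Fin n → ℝ)
    (hmax : ∀ θ : Fin n → ℝ,
      ∑ k, Real.exp (-(γ₂ * (y k - dotR (x k) θ) ^ 2)) ≤
        ∑ k, Real.exp (-(γ₂ * (y k - dotR (x k) θs) ^ 2))) :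
    nrm (θs - θo) ≤
      (1 / (a * (⨅ t, nrm (x t)))) *
        Real.sqrt ((2 / γ₂) *
          Real.log (1 /
            muVal (Real.exp (-(γ₂ * ε ^ 2)))
              (((Finset.univ.filter fun t => |v t| ≤ ε).card : ℝ) / N)
              (rhoX x a))) := by
  classical
  have hN' : (0:ℝ) < N := by exact_mod_cast hN
  have hnrm_nonneg : ∀ m (w : Fin m → ℝ), 0 ≤ nrm w := fun m w => Real.sqrt_nonneg _
  have hnrm_pos : ∀ t, 0 < nrm (x t) := by
    intro t
    obtain ⟨i, hi⟩ := Function.ne_iff.mp (hx t)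
    have hpos : 0 < ∑ i, (x t i) ^ 2 :=
      Finset.sum_pos' (fun j _ => sq_nonneg _)
        ⟨i, Finset.mem_univ _, by simpa using pow_pos (abs_pos.mpr (by simpa using hi)) 2 |>.trans_eq (by rw [sq_abs])⟩
    exact Real.sqrt_pos.mpr hpos
  haveI : Nonempty (Fin N) := ⟨⟨0, hN⟩⟩
  set η := θs - θo with hηdef
  set s := Real.exp (-(γ₂ * ε ^ 2)) with hsdef
  set I0 := Finset.univ.filter (fun t => |v t| ≤ ε) with hI0def
  set q : ℝ := ((I0.card : ℝ) / N) with hqdef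
  set ρ := rhoX x a with hρdef
  set r := ⨅ t, nrm (x t) with hrdef
  clear_value η s I0 q ρ r
  obtain ⟨t0, ht0⟩ := Finite.exists_min (fun t => nrm (x t))
  have hr_pos : 0 < r := by
    rw [hrdef]; exact lt_of_lt_of_le (hnrm_pos t0) (le_ciInf ht0)
  have hr_le : ∀ t, r ≤ nrm (x t) := by
    intro t
    rw [hrdef]
    exact ciInf_le ⟨0, by rintro z ⟨u, rfl⟩; exact (hnrm_pos u).le⟩ t
  have har : 0 < a * r := mul_pos ha hr_pos
  have hs_pos : 0 < s := by rw [hsdef]; exact Real.exp_pos _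
  have hs1 : s ≤ 1 := by rw [hsdef]; exact Real.exp_le_one_iff.mpr (by nlinarith [sq_nonneg ε])
  have hq0 : 0 ≤ q := by
    rw [hqdef]; positivity
  have hq1 : q ≤ 1 := by
    rw [hqdef, div_le_one hN']
    exact_mod_cast (Finset.card_le_univ I0).trans_eq (by simp)
  by_cases hη0 : η = 0
  · rw [hη0]
    have h0 : nrm (0 : Fin n → ℝ) = 0 := by simp [nrm]
    rw [h0]
    exact mul_nonneg (le_of_lt (one_div_pos.mpr har)) (Real.sqrt_nonneg _)
  · -- main case
    set S := ((fun η : Fin n → ℝ => ((Iset x a η).card : ℝ)) '' {η | η ≠ 0}) with hSdef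
    have hSne : S.Nonempty := ⟨_, ⟨η, hη0, rfl⟩⟩
    have hSbdd : BddBelow S := ⟨0, by rintro z ⟨w, -, rfl⟩; positivity⟩
    have hρ_eq : ρ = (1 / N) * sInf S := by rw [hρdef, rhoX, hSdef]
    have hρ0 : 0 ≤ ρ := by
      rw [hρ_eq]
      have : 0 ≤ sInf S := le_csInf hSne (by rintro b ⟨w, -, rfl⟩; positivity)
      positivity
    have hρN : (N:ℝ) * ρ = sInf S := by
      rw [hρ_eq]; field_simp
    have hρle : (N:ℝ) * ρ ≤ ((Iset x a η).card : ℝ) := by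
      rw [hρN]; exact csInf_le hSbdd ⟨η, hη0, rfl⟩
    have hρ1 : ρ ≤ 1 := by
      have h1 : ((Iset x a η).card : ℝ) ≤ N := by
        exact_mod_cast (Finset.card_le_univ _).trans_eq (by simp)
      nlinarith
    set T := Iset x a η ∩ I0 with hTdef
    set c := ((T.card : ℝ)) with hcdef
    have hc0 : 0 ≤ c := by rw [hcdef]; positivity
    have hcN : c ≤ N := by
      rw [hcdef]
      exact_mod_cast (Finset.card_le_univ _).trans_eq (by simp)
    have hNq : (N:ℝ) * q = I0.card := by rw [hqdef]; field_simp
    have hcT : (N:ℝ) * (q + ρ - 1) ≤ c := by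
      have h1 : (Iset x a η ∪ I0).card + T.card = (Iset x a η).card + I0.card :=
        Finset.card_union_add_card_inter _ _
      have h2 : (Iset x a η ∪ I0).card ≤ N := (Finset.card_le_univ _).trans_eq (by simp)
      have h3 : ((Iset x a η).card : ℝ) + I0.card ≤ N + c := by
        rw [hcdef]; exact_mod_cast by omega
      nlinarith
    set E := Real.exp (-(γ₂ * (a * r * nrm η) ^ 2 / 2)) with hEdef
    clear_value T c E
    have hE_pos : 0 < E := by rw [hEdef]; exact Real.exp_pos _
    have hE1 : E ≤ 1 := by
      rw [hEdef]
      refine Real.exp_le_one_iff.mpr ?_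
      have h0 : 0 ≤ γ₂ * (a * r * nrm η) ^ 2 / 2 := by positivity
      linarith
    have hD0 : 0 ≤ a * r * nrm η := mul_nonneg har.le (hnrm_nonneg n η)
    -- per-term bound on T
    have hterm : ∀ t ∈ T, s * Real.exp (-(γ₂ * (y t - dotR (x t) θs) ^ 2)) ≤ E := by
      intro t ht
      simp only [hTdef, Iset, hI0def, Finset.mem_inter, Finset.mem_filter, Finset.mem_univ,
        true_and] at ht
      obtain ⟨h1, h2⟩ := ht
      have hu : a * r * nrm η ≤ |dotR (x t) η| := by
        refine le_trans ?_ h1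
        have := hr_le t
        nlinarith [hnrm_nonneg n η]
      have hres : y t - dotR (x t) θs = v t - dotR (x t) η := by
        have hdot : dotR (x t) η = dotR (x t) θs - dotR (x t) θo := by
          rw [hηdef]
          simp [dotR, mul_sub, Finset.sum_sub_distrib]
        rw [hy t, hdot]; ring
      rw [hres, hsdef, hEdef, ← Real.exp_add, Real.exp_le_exp]
      have hv2 : (v t) ^ 2 ≤ ε ^ 2 := by
        have := abs_le.mp h2; nlinarith
      have hu2 : (a * r * nrm η) ^ 2 ≤ (dotR (x t) η) ^ 2 := by
        have := sq_abs (dotR (x t) η)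
        nlinarith [abs_nonneg (dotR (x t) η)]
      have hkey : (a * r * nrm η) ^ 2 / 2 ≤ ε ^ 2 + (v t - dotR (x t) η) ^ 2 := by
        nlinarith [sq_nonneg (2 * v t - dotR (x t) η)]
      nlinarith [mul_le_mul_of_nonneg_left hkey hγ₂.le]
    -- lower bound on objective at θo
    have hA : (I0.card : ℝ) * s ≤ ∑ k, Real.exp (-(γ₂ * (y k - dotR (x k) θo) ^ 2)) := by
      have h1 : ∀ t ∈ I0, s ≤ Real.exp (-(γ₂ * (y t - dotR (x t) θo) ^ 2)) := by
        intro t ht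
        rw [hI0def, Finset.mem_filter] at ht
        have hyt : y t - dotR (x t) θo = v t := by rw [hy t]; ring
        rw [hyt, hsdef, Real.exp_le_exp]
        obtain ⟨hv1, hv2⟩ := abs_le.mp ht.2
        have hv3 : (v t) ^ 2 ≤ ε ^ 2 := by nlinarith
        nlinarith [mul_le_mul_of_nonneg_left hv3 hγ₂.le]
      calc (I0.card : ℝ) * s = I0.card • s := by rw [nsmul_eq_mul]
        _ ≤ ∑ t ∈ I0, Real.exp (-(γ₂ * (y t - dotR (x t) θo) ^ 2)) :=
            Finset.card_nsmul_le_sum _ _ _ h1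
        _ ≤ _ := Finset.sum_le_sum_of_subset_of_nonneg (Finset.subset_univ _)
            (fun i _ _ => (Real.exp_pos _).le)
    -- upper bound on objective at θs
    have hC : s * ∑ k, Real.exp (-(γ₂ * (y k - dotR (x k) θs) ^ 2)) ≤ c * E + ((N:ℝ) - c) * s := by
      rw [Finset.mul_sum, ← Finset.sum_sdiff (Finset.subset_univ T)]
      have hC1 : ∑ t ∈ T, s * Real.exp (-(γ₂ * (y t - dotR (x t) θs) ^ 2)) ≤ c * E := by
        calc _ ≤ T.card • E := Finset.sum_le_card_nsmul _ _ _ hterm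
          _ = c * E := by rw [nsmul_eq_mul, hcdef]
      have hC2 : ∑ t ∈ Finset.univ \ T, s * Real.exp (-(γ₂ * (y t - dotR (x t) θs) ^ 2))
          ≤ ((N:ℝ) - c) * s := by
        have hb : ∀ t ∈ Finset.univ \ T, s * Real.exp (-(γ₂ * (y t - dotR (x t) θs) ^ 2)) ≤ s := by
          intro t _
          have hle1 : Real.exp (-(γ₂ * (y t - dotR (x t) θs) ^ 2)) ≤ 1 :=
            Real.exp_le_one_iff.mpr (by nlinarith [sq_nonneg (y t - dotR (x t) θs)])
          nlinarith
        have hle : T.card ≤ N := by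
          have := Finset.card_le_univ T
          simpa using this
        have hcard : ((Finset.univ \ T).card : ℝ) = (N:ℝ) - c := by
          rw [Finset.card_sdiff_of_subset (Finset.subset_univ T), Finset.card_univ, Fintype.card_fin,
            Nat.cast_sub hle, hcdef]
        calc _ ≤ (Finset.univ \ T).card • s := Finset.sum_le_card_nsmul _ _ _ hb
          _ = ((N:ℝ) - c) * s := by rw [nsmul_eq_mul, hcard]
      linarith
    -- combined counting inequality
    have hsum : (N:ℝ) * q * s * s ≤ c * E + ((N:ℝ) - c) * s := by
      have h1 := hmax θo
      have h2 : ((I0.card : ℝ) * s) * s ≤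
          (∑ k, Real.exp (-(γ₂ * (y k - dotR (x k) θs) ^ 2))) * s :=
        mul_le_mul_of_nonneg_right (hA.trans h1) hs_pos.le
      calc (N:ℝ) * q * s * s = ((I0.card : ℝ) * s) * s := by rw [hNq]
        _ ≤ (∑ k, Real.exp (-(γ₂ * (y k - dotR (x k) θs) ^ 2))) * s := h2
        _ = s * ∑ k, Real.exp (-(γ₂ * (y k - dotR (x k) θs) ^ 2)) := by ring
        _ ≤ _ := hC
    -- stability rearranged
    have h1s : (0:ℝ) < 1 + s := by linarith
    have hstab2 : 1 + s < ρ + (1 + s) * (s * q) := by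
      have h := mul_lt_mul_of_pos_left hstab h1s
      have heq : (1 + s) * (ρ / (1 + s) + s * q) = ρ + (1 + s) * (s * q) := by
        field_simp
      rw [heq] at h; linarith
    have hd : 0 < q + ρ - 1 := by
      have h1 : ρ / (1 + s) ≤ ρ := div_le_self hρ0 (by linarith)
      have h2 : s * q ≤ q := mul_le_of_le_one_left hq0 hs1
      have := hstab
      linarith
    -- key inequality
    have hG : ρ + (1 + s) * (s * q - 1) ≤ E * (q + ρ - 1) := by
      have hsq1 : s * q ≤ 1 := mul_le_one₀ hs1 hq0 hq1
      rcases le_or_gt s E with hse | hse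
      · linarith [mul_nonneg (sub_nonneg.2 hs1) (sub_nonneg.2 hρ1),
          mul_nonneg hs_pos.le (sub_nonneg.2 hsq1),
          mul_le_mul_of_nonneg_right hse hd.le]
      · have hkey : (q + ρ - 1) * (s - E) ≤ s * (1 - q * s) := by
          have h1 : (N:ℝ) * (q + ρ - 1) * (s - E) ≤ c * (s - E) :=
            mul_le_mul_of_nonneg_right hcT (by linarith)
          have h2 : c * (s - E) ≤ (N:ℝ) * (s * (1 - q * s)) := by linarith [hsum]
          have h3 := h1.trans h2
          exact le_of_mul_le_mul_left (by linarith) hN'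
        linarith [mul_nonneg (sub_nonneg.2 hs1) (sub_nonneg.2 hρ1)]
    have hμeq : muVal s q ρ = (ρ + (1 + s) * (s * q - 1)) / (q + ρ - 1) := by
      unfold muVal
      rw [div_mul_eq_mul_div]
      congr 1
      field_simp
      ring
    have hμpos : 0 < muVal s q ρ := by
      rw [hμeq]
      exact div_pos (by nlinarith) hd
    have hμE : muVal s q ρ ≤ E := by
      rw [hμeq, div_le_iff₀ hd]
      linarith
    -- convert to the norm bound
    have hlog : Real.log (muVal s q ρ) ≤ -(γ₂ * (a * r * nrm η) ^ 2 / 2) := by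
      calc Real.log (muVal s q ρ) ≤ Real.log E := Real.log_le_log hμpos hμE
        _ = -(γ₂ * (a * r * nrm η) ^ 2 / 2) := by rw [hEdef, Real.log_exp]
    have hD2 : (a * r * nrm η) ^ 2 ≤ (2 / γ₂) * Real.log (1 / muVal s q ρ) := by
      rw [one_div, Real.log_inv]
      have h1 : γ₂ * (a * r * nrm η) ^ 2 / 2 ≤ -Real.log (muVal s q ρ) := by linarith
      calc (a * r * nrm η) ^ 2 = (2 / γ₂) * (γ₂ * (a * r * nrm η) ^ 2 / 2) := by
            field_simp
        _ ≤ (2 / γ₂) * -Real.log (muVal s q ρ) :=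
            mul_le_mul_of_nonneg_left h1 (by positivity)
    have hsq : a * r * nrm η ≤ Real.sqrt ((2 / γ₂) * Real.log (1 / muVal s q ρ)) := by
      calc a * r * nrm η = Real.sqrt ((a * r * nrm η) ^ 2) := (Real.sqrt_sq hD0).symm
        _ ≤ _ := Real.sqrt_le_sqrt hD2
    have h := mul_le_mul_of_nonneg_left hsq (le_of_lt (one_div_pos.mpr har))
    have heq : (1 / (a * r)) * (a * r * nrm η) = nrm η := by
      rw [one_div, inv_mul_cancel_left₀ har.ne']
    rw [heq] at h
    exact h
end
end

section
/- (No exact recovery for the Gaussian-kernel maximum correntropy estimator) Let x_1,…,x_N ∈ ℝⁿ be nonzero vectors, θ° ∈ ℝⁿ, γ > 0, ε > 0, and let I ⊆ {1,…,N} be a nonempty index set. Then there exists a noise sequence v_1,…,v_N with v_t = 0 for t ∉ I and |v_t| > ε for t ∈ I, such that, setting y_t = x_tᵀθ° + v_t, the vector θ° is NOT a maximizer over ℝⁿ of θ ↦ ∑_{t=1}^N exp(−γ(y_t − x_tᵀθ)²). In particular, one can choose the v_t so that ∑_{t∈I} exp(−γv_t²)·v_t·x_t ≠ 0, which makes the gradient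 of the objective at θ° nonzero. -/
open scoped BigOperators

noncomputable section

lemma dotR_add_smul {n : ℕ} (u a b : Fin n → ℝ) (c : ℝ) :
    dotR u (a + c • b) = dotR u a + c * dotR u b := by
  simp [dotR, mul_add, Finset.sum_add_distrib, Finset.mul_sum, mul_left_comm]

lemma term_deriv (γ w a : ℝ) :
    HasDerivAt (fun s : ℝ => Real.exp (-(γ * (w - s * a) ^ 2)))
      (Real.exp (-(γ * w ^ 2)) * (2 * γ * w * a)) 0 := by
  have h1 : HasDerivAt (fun s : ℝ => w - s * a) (-a) 0 := by
    simpa using ((hasDerivAt_id (0:ℝ)).mul_const a).const_sub w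
  have h2 : HasDerivAt (fun s : ℝ => -(γ * (w - s * a) ^ 2))
      (-(γ * (2 * (w - 0 * a) ^ 1 * -a))) 0 := by
    simpa using (((h1.pow 2).const_mul γ).fun_neg)
  have h3 := h2.exp
  convert h3 using 1
  ring_nf

lemma exists_gt_of_hasDerivAt_pos (φ : ℝ → ℝ) (D : ℝ) (hD : 0 < D)
    (h : HasDerivAt φ D 0) : ∃ s : ℝ, φ 0 < φ s := by
  have hs := hasDerivAt_iff_tendsto_slope.mp h
  have hev : ∀ᶠ s in nhdsWithin 0 {(0:ℝ)}ᶜ, 0 < slope φ 0 s :=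
    hs.eventually (eventually_gt_nhds hD)
  have hle : nhdsWithin (0:ℝ) (Set.Ioi 0) ≤ nhdsWithin 0 {(0:ℝ)}ᶜ :=
    nhdsWithin_mono 0 (fun s hs => ne_of_gt hs)
  have hev2 : ∀ᶠ s in nhdsWithin (0:ℝ) (Set.Ioi 0), 0 < slope φ 0 s := hle hev
  have hmem : ∀ᶠ s in nhdsWithin (0:ℝ) (Set.Ioi 0), s ∈ Set.Ioi (0:ℝ) :=
    self_mem_nhdsWithin
  obtain ⟨s, hs1, hs2⟩ := (hev2.and hmem).exists
  have hspos : (0:ℝ) < s := hs2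
  have hslope : slope φ 0 s = (φ s - φ 0) / s := by simp [slope_def_field]
  rw [hslope] at hs1
  have h' := mul_pos hs1 hspos
  rw [div_mul_cancel₀ _ (ne_of_gt hspos)] at h'
  exact ⟨s, by linarith⟩

lemma not_max_of_grad {n N : ℕ} (x : Fin N → Fin n → ℝ) (θo : Fin n → ℝ)
    (γ : ℝ) (hγ : 0 < γ) (I : Finset (Fin N)) (v : Fin N → ℝ)
    (hv0 : ∀ t ∉ I, v t = 0)
    (hS : (∑ t ∈ I, (Real.exp (-(γ * v t ^ 2)) * v t) • x t) ≠ 0) :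
    ¬ (∀ θ : Fin n → ℝ,
        ∑ t, Real.exp (-(γ * ((dotR (x t) θo + v t) - dotR (x t) θ) ^ 2)) ≤
          ∑ t, Real.exp (-(γ * ((dotR (x t) θo + v t) - dotR (x t) θo) ^ 2))) := by
  intro hmax
  obtain ⟨d, hd⟩ : ∃ d, d = ∑ t ∈ I, (Real.exp (-(γ * v t ^ 2)) * v t) • x t := ⟨_, rfl⟩
  obtain ⟨a, ha⟩ : ∃ a : Fin N → ℝ, a = fun t => dotR (x t) d := ⟨_, rfl⟩
  obtain ⟨φ, hφ⟩ : ∃ φ : ℝ → ℝ, φ = fun s => ∑ t, Real.exp (-(γ * (v t - s * a t) ^ 2)) := ⟨_, rfl⟩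
  have hderiv : HasDerivAt φ
      (∑ t, Real.exp (-(γ * v t ^ 2)) * (2 * γ * v t * a t)) 0 := by
    rw [hφ]; exact HasDerivAt.fun_sum (fun t _ => term_deriv γ (v t) (a t))
  have hdi : ∀ i, d i = ∑ t ∈ I, (Real.exp (-(γ * v t ^ 2)) * v t) * x t i := by
    intro i
    rw [hd]
    simp [Finset.sum_apply]
  have hdd : dotR d d = ∑ t ∈ I, (Real.exp (-(γ * v t ^ 2)) * v t) * a t := by
    unfold dotR
    calc ∑ i, d i * d i
        = ∑ i, (∑ t ∈ I, (Real.exp (-(γ * v t ^ 2)) * v t) * x t i) * d i := by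
          simp_rw [← hdi]
      _ = ∑ i, ∑ t ∈ I, (Real.exp (-(γ * v t ^ 2)) * v t) * (x t i * d i) := by
          apply Finset.sum_congr rfl; intro i _; rw [Finset.sum_mul]
          apply Finset.sum_congr rfl; intro t _; ring
      _ = ∑ t ∈ I, ∑ i, (Real.exp (-(γ * v t ^ 2)) * v t) * (x t i * d i) :=
          Finset.sum_comm
      _ = ∑ t ∈ I, (Real.exp (-(γ * v t ^ 2)) * v t) * a t := by
          apply Finset.sum_congr rfl; intro t _; rw [← Finset.mul_sum]; simp [ha, dotR]
  have hDval : (∑ t, Real.exp (-(γ * v t ^ 2)) * (2 * γ * v t * a t))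
      = 2 * γ * dotR d d := by
    rw [hdd, Finset.mul_sum]
    rw [← Finset.sum_subset (Finset.subset_univ I)]
    · apply Finset.sum_congr rfl; intro t _; ring
    · intro t _ ht; rw [hv0 t ht]; ring
  have hdne : ∃ i, d i ≠ 0 := by
    by_contra h
    push_neg at h
    exact hS (hd ▸ funext h)
  have hddpos : 0 < dotR d d := by
    obtain ⟨i, hi⟩ := hdne
    unfold dotR
    apply Finset.sum_pos' (fun j _ => mul_self_nonneg (d j))
    exact ⟨i, Finset.mem_univ i, mul_self_pos.mpr hi⟩
  rw [hDval] at hderiv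
  obtain ⟨s, hlt⟩ := exists_gt_of_hasDerivAt_pos φ _ (by positivity) hderiv
  have h1 : φ 0 = ∑ t, Real.exp (-(γ * ((dotR (x t) θo + v t) - dotR (x t) θo) ^ 2)) := by
    rw [hφ]; apply Finset.sum_congr rfl; intro t _; norm_num
  have h2 : φ s = ∑ t, Real.exp (-(γ * ((dotR (x t) θo + v t) - dotR (x t) (θo + s • d)) ^ 2)) := by
    rw [hφ]
    apply Finset.sum_congr rfl; intro t _
    rw [dotR_add_smul, ha]
    ring_nf
  have := hmax (θo + s • d)
  rw [← h1, ← h2] at this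
  exact absurd this (not_le.mpr hlt)

/-- no exact recovery for the Gaussian-kernel maximum correntropy
estimator: for any nonzero regressors, any nonempty outlier index set `I`, any
`γ > 0` and any `ε > 0`, there is a noise sequence vanishing off `I`, of
magnitude `> ε` on `I`, making the (weighted) gradient sum nonzero, such that
`θ°` is not a maximizer of the sample Gaussian correntropy. -/
theorem mce_gaussian_no_exact_recovery {n N : ℕ}
    (x : Fin N → Fin n → ℝ) (hx : ∀ t, x t ≠ 0)
    (θo : Fin n → ℝ) (γ : ℝ) (hγ : 0 < γ) (ε : ℝ) (hε : 0 < ε)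
    (I : Finset (Fin N)) (hI : I.Nonempty) :
    ∃ v : Fin N → ℝ,
      (∀ t ∉ I, v t = 0) ∧
      (∀ t ∈ I, ε < |v t|) ∧
      (∑ t ∈ I, (Real.exp (-(γ * v t ^ 2)) * v t) • x t) ≠ 0 ∧
      ¬ (∀ θ : Fin n → ℝ,
          ∑ t, Real.exp (-(γ * ((dotR (x t) θo + v t) - dotR (x t) θ) ^ 2)) ≤
            ∑ t, Real.exp (-(γ * ((dotR (x t) θo + v t) - dotR (x t) θo) ^ 2))) := by
  obtain ⟨t0, ht0⟩ := hI
  obtain ⟨g, hg⟩ : ∃ g : ℝ → ℝ, g = fun c => Real.exp (-(γ * c ^ 2)) * c := ⟨_, rfl⟩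
  have hgpos : ∀ c, 0 < c → 0 < g c := fun c hc => by
    rw [hg]; exact mul_pos (Real.exp_pos _) hc
  obtain ⟨A, hA⟩ : ∃ A, A = g (2 * ε) := ⟨_, rfl⟩
  have hApos : 0 < A := hA ▸ hgpos _ (by linarith)
  obtain ⟨c2, hc2⟩ : ∃ c2 : ℝ, c2 = max (2 * ε) (2 / (γ * A)) := ⟨_, rfl⟩
  have hc2ge : 2 * ε ≤ c2 := hc2 ▸ le_max_left _ _
  have hc2pos : 0 < c2 := lt_of_lt_of_le (by linarith) hc2ge
  have hgc2 : g c2 < A := by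
    have hX : (0:ℝ) < γ * c2 ^ 2 := by positivity
    have h0 : γ * c2 ^ 2 ≤ Real.exp (γ * c2 ^ 2) := by
      have := Real.add_one_le_exp (γ * c2 ^ 2); linarith
    have hexp : Real.exp (-(γ * c2 ^ 2)) ≤ 1 / (γ * c2 ^ 2) := by
      have := one_div_le_one_div_of_le hX h0
      rw [Real.exp_neg]
      simpa [one_div] using this
    have h1 : g c2 ≤ 1 / (γ * c2) := by
      have hm : g c2 ≤ (1 / (γ * c2 ^ 2)) * c2 := by
        rw [hg]
        exact mul_le_mul_of_nonneg_right hexp (le_of_lt hc2pos)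
      have heq : (1 / (γ * c2 ^ 2)) * c2 = 1 / (γ * c2) := by
        field_simp
      linarith [heq ▸ hm]
    have h2 : 2 / (γ * A) ≤ c2 := hc2 ▸ le_max_right _ _
    have hmul : γ * (2 / (γ * A)) ≤ γ * c2 := mul_le_mul_of_nonneg_left h2 hγ.le
    have heq2 : γ * (2 / (γ * A)) = 2 / A := by field_simp
    rw [heq2] at hmul
    have h3 : 1 / (γ * c2) ≤ 1 / (2 / A) := one_div_le_one_div_of_le (by positivity) hmul
    rw [one_div_div] at h3
    linarith
  classical
  obtain ⟨w, hw⟩ : ∃ w : ℝ → Fin N → ℝ,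
      w = fun c t => if t ∈ I then (if t = t0 then c else 2 * ε) else 0 := ⟨_, rfl⟩
  have hwzero : ∀ c, ∀ t ∉ I, w c t = 0 := by
    intro c t ht; simp [hw, ht]
  have hwabs : ∀ c, ε < c → ∀ t ∈ I, ε < |w c t| := by
    intro c hc t ht
    rw [hw]
    simp only [if_pos ht]
    by_cases h : t = t0
    · rw [if_pos h, abs_of_pos (by linarith)]; exact hc
    · rw [if_neg h, abs_of_pos (by linarith)]; linarith
  obtain ⟨S, hSdef⟩ : ∃ S : ℝ → (Fin n → ℝ),
      S = fun c => ∑ t ∈ I, (Real.exp (-(γ * w c t ^ 2)) * w c t) • x t := ⟨_, rfl⟩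
  have hdiff : S (2 * ε) - S c2 = (A - g c2) • x t0 := by
    rw [hSdef]
    simp only
    rw [← Finset.sum_sub_distrib, Finset.sum_eq_single t0]
    · rw [hw, hA, hg, ← sub_smul]
      simp [ht0]
    · intro t htI htne
      rw [hw]
      simp only [if_pos htI, if_neg htne]
      rw [sub_self]
    · intro h; exact absurd ht0 h
  have hne : A - g c2 ≠ 0 := fun h => by linarith
  have hkey : S (2 * ε) ≠ 0 ∨ S c2 ≠ 0 := by
    by_contra h
    push_neg at h
    rw [h.1, h.2, sub_zero] at hdiff
    rcases smul_eq_zero.mp hdiff.symm with h' | h'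
    · exact hne h'
    · exact hx t0 h'
  have hSapp : ∀ c, S c = ∑ t ∈ I, (Real.exp (-(γ * w c t ^ 2)) * w c t) • x t := by
    intro c; rw [hSdef]
  rcases hkey with hk | hk
  · rw [hSapp] at hk
    exact ⟨w (2 * ε), hwzero _, hwabs _ (by linarith), hk,
      not_max_of_grad x θo γ hγ I _ (hwzero _) hk⟩
  · rw [hSapp] at hk
    have hc2ε : ε < c2 := by linarith
    exact ⟨w c2, hwzero _, hwabs _ hc2ε, hk,
      not_max_of_grad x θo γ hγ I _ (hwzero _) hk⟩
end
end
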